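/- Conversely, let Φ : Γ̃ → ℂ^× be a group homomorphism and w a rational number with Φ(I₃,1) = e^{2πi w}. Then ℓ(g,τ) = Φ(g,0)·exp(w·j̃(g,τ)) is a multiplier system on Γ of weight w; in particular if w = a/b then ℓ(g,τ)^b = Φ(g,0)^b · j(g,τ)^a. -/

import Mathlib

noncomputable section

open Matrix Complex

/-- The Hermitian form matrix `J`. -/
def Jmat : Matrix (Fin 3) (Fin 3) ℂ := !![0,0,1; 0,1,0; 1,0,0]

/-- The group `SU(2,1)` as a subset of 3×3 complex matrices. -/
def SU21 : Set (Matrix (Fin 3) (Fin 3) ℂ) :=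
  {g | g.det = 1 ∧ gᴴ * Jmat * g = Jmat}

/-- The symmetric space `H = {τ ∈ ℂ² : 2 Re τ₁ + |τ₂|² < 0}`. -/
def UpperH : Set (ℂ × ℂ) := {τ | 2 * τ.1.re + Complex.normSq τ.2 < 0}

/-- The automorphy factor `j(g,τ) = Cτ + D`. -/
def jcocycle (g : Matrix (Fin 3) (Fin 3) ℂ) (τ : ℂ × ℂ) : ℂ :=
  g 2 0 * τ.1 + g 2 1 * τ.2 + g 2 2

/-- The action `g*τ = (Aτ+B)/(Cτ+D)`. -/
def act (g : Matrix (Fin 3) (Fin 3) ℂ) (τ : ℂ × ℂ) : ℂ × ℂ :=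
  ((g 0 0 * τ.1 + g 0 1 * τ.2 + g 0 2) / jcocycle g τ,
   (g 1 0 * τ.1 + g 1 1 * τ.2 + g 1 2) / jcocycle g τ)

/-- The function `X(g)`: minus the bottom-left entry when that is nonzero,
and otherwise the bottom-right entry. -/
def Xfun (g : Matrix (Fin 3) (Fin 3) ℂ) : ℂ :=
  if g 2 0 ≠ 0 then -(g 2 0) else g 2 2

/-- The branch `j̃(g,τ) = log(j(g,τ)/X(g)) + log(X(g))` of `log j(g,τ)`,
using the principal branch of `log` (imaginary part in `(-π, π]`). -/
def jtilde (g : Matrix (Fin 3) (Fin 3) ℂ) (τ : ℂ × ℂ) : ℂ :=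
  Complex.log (jcocycle g τ / Xfun g) + Complex.log (Xfun g)

/-- A fixed base point of `H`. -/
def τ0 : ℂ × ℂ := (-1, 0)

/-- The (complex-valued expression for the) cocycle
`σ(g,h) = (1/2πi)(j̃(gh,τ) − j̃(g,h*τ) − j̃(h,τ))`, evaluated at the base
point `τ0 ∈ H`. -/
def sigmaC (g h : Matrix (Fin 3) (Fin 3) ℂ) : ℂ :=
  (jtilde (g * h) τ0 - jtilde g (act h τ0) - jtilde h τ0) / (2 * Real.pi * Complex.I)

/-- The integer-valued cocycle `σ` (for `g,h ∈ SU(2,1)` the quantity `sigmaC g h`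
is an integer, so taking the floor of its real part recovers it). -/
def sigmaZ (g h : Matrix (Fin 3) (Fin 3) ℂ) : ℤ := ⌊(sigmaC g h).re⌋

/-- The twisted multiplication on `SU(2,1) × ℤ` defining the universal cover. -/
def gmul (p q : Matrix (Fin 3) (Fin 3) ℂ × ℤ) : Matrix (Fin 3) (Fin 3) ℂ × ℤ :=
  (p.1 * q.1, p.2 + q.2 + sigmaZ p.1 q.1)

/-- Conversely, a homomorphism `Φ : Γ̃ → ℂˣ` with `Φ(I₃,1) = e^{2πi w}` gives
rise to a weight-`w` multiplier system `ℓ(g,τ) = Φ(g,0)·exp(w·j̃(g,τ))`; in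
particular if `w = a/b` then `ℓ(g,τ)^b = Φ(g,0)^b · j(g,τ)^a`. -/
lemma Jsq : Jmat * Jmat = 1 := by
  simp [Jmat]
  exact (Matrix.etaExpand_eq (1 : Matrix (Fin 3) (Fin 3) ℂ)).symm ▸ rfl

lemma gJgH {g : Matrix (Fin 3) (Fin 3) ℂ} (hg : g ∈ SU21) : g * Jmat * gᴴ = Jmat := by
  obtain ⟨hdet, hG⟩ := hg
  have hu : IsUnit g.det := by rw [hdet]; exact isUnit_one
  have h1 : gᴴ * Jmat = Jmat * g⁻¹ := by
    calc gᴴ * Jmat = (gᴴ * Jmat * g) * g⁻¹ := by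
          rw [Matrix.mul_assoc, Matrix.mul_nonsing_inv _ hu, Matrix.mul_one]
      _ = Jmat * g⁻¹ := by rw [hG]
  have h2 : gᴴ = Jmat * g⁻¹ * Jmat := by
    calc gᴴ = gᴴ * Jmat * Jmat := by rw [Matrix.mul_assoc, Jsq, Matrix.mul_one]
      _ = Jmat * g⁻¹ * Jmat := by rw [h1]
  rw [h2, ← Matrix.mul_assoc, ← Matrix.mul_assoc, Matrix.mul_assoc g Jmat Jmat, Jsq,
    Matrix.mul_one, Matrix.mul_nonsing_inv _ hu, Matrix.one_mul]

lemma rowrel {g : Matrix (Fin 3) (Fin 3) ℂ} (hg : g ∈ SU21) :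
    g 2 0 * (starRingEnd ℂ) (g 2 2) + g 2 1 * (starRingEnd ℂ) (g 2 1)
      + g 2 2 * (starRingEnd ℂ) (g 2 0) = 0 := by
  have h := congrFun (congrFun (gJgH hg) 2) 2
  simp [Matrix.mul_apply, Fin.sum_univ_three, Matrix.conjTranspose_apply, Jmat,
    Matrix.vecHead, Matrix.vecTail] at h
  linear_combination h

lemma g21_eq {g : Matrix (Fin 3) (Fin 3) ℂ} (hg : g ∈ SU21) (h0 : g 2 0 = 0) :
    g 2 1 = 0 := by
  have h := rowrel hg
  rw [h0] at h
  simp [Complex.mul_conj] at h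
  exact_mod_cast h

lemma Xfun_ne {g : Matrix (Fin 3) (Fin 3) ℂ} (hg : g ∈ SU21) : Xfun g ≠ 0 := by
  unfold Xfun; split_ifs with h
  · simpa using h
  · push_neg at h
    intro h22
    have h21 := g21_eq hg h
    have hdet := hg.1
    rw [Matrix.det_fin_three, h, h21, h22] at hdet
    simp at hdet

lemma re_div_pos {g : Matrix (Fin 3) (Fin 3) ℂ} (hg : g ∈ SU21) {τ : ℂ × ℂ}
    (hτ : τ ∈ UpperH) : 0 < (jcocycle g τ / Xfun g).re := by
  by_cases hc : g 2 0 = 0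
  · have h21 := g21_eq hg hc
    have hX : Xfun g = g 2 2 := by unfold Xfun; rw [if_neg (by simpa using hc)]
    have h22 : g 2 2 ≠ 0 := hX ▸ Xfun_ne hg
    have : jcocycle g τ / Xfun g = 1 := by
      unfold jcocycle; rw [hX, hc, h21]; simp [h22]
    rw [this]; norm_num
  · have hc' : (starRingEnd ℂ) (g 2 0) ≠ 0 := by
      simpa using hc
    set α := g 2 1 / g 2 0 with hα
    set β := g 2 2 / g 2 0 with hβ
    have hcb : (starRingEnd ℂ) β + α * (starRingEnd ℂ) α + β = 0 := by
      have h := rowrel hg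
      rw [hα, hβ]
      simp only [map_div₀]
      field_simp
      linear_combination h
    have hre : β.re = -(Complex.normSq α)/2 := by
      have h2 := congrArg Complex.re hcb
      simp only [Complex.add_re, Complex.conj_re, Complex.mul_conj, Complex.ofReal_re,
        Complex.zero_re] at h2
      linarith
    have hratio : jcocycle g τ / Xfun g = -(τ.1 + α * τ.2 + β) := by
      unfold jcocycle Xfun
      rw [if_pos (by simpa using hc), hα, hβ]
      field_simp [hc]
    rw [hratio]
    have hb1 : (α * τ.2).re ≤ ‖α‖ * ‖τ.2‖ := by
      calc (α * τ.2).re ≤ ‖α * τ.2‖ := Complex.re_le_norm _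
        _ = ‖α‖ * ‖τ.2‖ := norm_mul _ _
    have hτ' : 2 * τ.1.re + (‖τ.2‖)^2 < 0 := by
      rw [Complex.sq_norm]; exact hτ
    have hre' : β.re = -((‖α‖)^2)/2 := by rw [hre, Complex.sq_norm]
    simp only [Complex.neg_re, Complex.add_re]
    nlinarith [sq_nonneg (‖τ.2‖ - ‖α‖)]

lemma jcocycle_ne {g : Matrix (Fin 3) (Fin 3) ℂ} (hg : g ∈ SU21) {τ : ℂ × ℂ}
    (hτ : τ ∈ UpperH) : jcocycle g τ ≠ 0 := by
  intro h
  have := re_div_pos hg hτ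
  rw [h] at this
  simp at this

lemma form_inv {g : Matrix (Fin 3) (Fin 3) ℂ} (hg : g ∈ SU21) (t1 t2 : ℂ) :
    (starRingEnd ℂ) (g 0 0*t1+g 0 1*t2+g 0 2) * (g 2 0*t1+g 2 1*t2+g 2 2)
    + (starRingEnd ℂ) (g 1 0*t1+g 1 1*t2+g 1 2) * (g 1 0*t1+g 1 1*t2+g 1 2)
    + (starRingEnd ℂ) (g 2 0*t1+g 2 1*t2+g 2 2) * (g 0 0*t1+g 0 1*t2+g 0 2)
    = (starRingEnd ℂ) t1 + t1 + (starRingEnd ℂ) t2 * t2 := by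
  obtain ⟨-, hG⟩ := hg
  have e00 : (starRingEnd ℂ) (g 0 0) * g 2 0 + (starRingEnd ℂ) (g 1 0) * g 1 0 + (starRingEnd ℂ) (g 2 0) * g 0 0 = 0 := by
    have h := congrFun (congrFun hG 0) 0
    simp [Matrix.mul_apply, Fin.sum_univ_three, Matrix.conjTranspose_apply, Jmat,
      Matrix.vecHead, Matrix.vecTail] at h
    linear_combination h
  have e01 : (starRingEnd ℂ) (g 0 0) * g 2 1 + (starRingEnd ℂ) (g 1 0) * g 1 1 + (starRingEnd ℂ) (g 2 0) * g 0 1 = 0 := by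
    have h := congrFun (congrFun hG 0) 1
    simp [Matrix.mul_apply, Fin.sum_univ_three, Matrix.conjTranspose_apply, Jmat,
      Matrix.vecHead, Matrix.vecTail] at h
    linear_combination h
  have e02 : (starRingEnd ℂ) (g 0 0) * g 2 2 + (starRingEnd ℂ) (g 1 0) * g 1 2 + (starRingEnd ℂ) (g 2 0) * g 0 2 = 1 := by
    have h := congrFun (congrFun hG 0) 2
    simp [Matrix.mul_apply, Fin.sum_univ_three, Matrix.conjTranspose_apply, Jmat,
      Matrix.vecHead, Matrix.vecTail] at h
    linear_combination h
  have e10 : (starRingEnd ℂ) (g 0 1) * g 2 0 + (starRingEnd ℂ) (g 1 1) * g 1 0 + (starRingEnd ℂ) (g 2 1) * g 0 0 = 0 := by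
    have h := congrFun (congrFun hG 1) 0
    simp [Matrix.mul_apply, Fin.sum_univ_three, Matrix.conjTranspose_apply, Jmat,
      Matrix.vecHead, Matrix.vecTail] at h
    linear_combination h
  have e11 : (starRingEnd ℂ) (g 0 1) * g 2 1 + (starRingEnd ℂ) (g 1 1) * g 1 1 + (starRingEnd ℂ) (g 2 1) * g 0 1 = 1 := by
    have h := congrFun (congrFun hG 1) 1
    simp [Matrix.mul_apply, Fin.sum_univ_three, Matrix.conjTranspose_apply, Jmat,
      Matrix.vecHead, Matrix.vecTail] at h
    linear_combination h
  have e12 : (starRingEnd ℂ) (g 0 1) * g 2 2 + (starRingEnd ℂ) (g 1 1) * g 1 2 + (starRingEnd ℂ) (g 2 1) * g 0 2 = 0 := by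
    have h := congrFun (congrFun hG 1) 2
    simp [Matrix.mul_apply, Fin.sum_univ_three, Matrix.conjTranspose_apply, Jmat,
      Matrix.vecHead, Matrix.vecTail] at h
    linear_combination h
  have e20 : (starRingEnd ℂ) (g 0 2) * g 2 0 + (starRingEnd ℂ) (g 1 2) * g 1 0 + (starRingEnd ℂ) (g 2 2) * g 0 0 = 1 := by
    have h := congrFun (congrFun hG 2) 0
    simp [Matrix.mul_apply, Fin.sum_univ_three, Matrix.conjTranspose_apply, Jmat,
      Matrix.vecHead, Matrix.vecTail] at h
    linear_combination h
  have e21 : (starRingEnd ℂ) (g 0 2) * g 2 1 + (starRingEnd ℂ) (g 1 2) * g 1 1 + (starRingEnd ℂ) (g 2 2) * g 0 1 = 0 := by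
    have h := congrFun (congrFun hG 2) 1
    simp [Matrix.mul_apply, Fin.sum_univ_three, Matrix.conjTranspose_apply, Jmat,
      Matrix.vecHead, Matrix.vecTail] at h
    linear_combination h
  have e22 : (starRingEnd ℂ) (g 0 2) * g 2 2 + (starRingEnd ℂ) (g 1 2) * g 1 2 + (starRingEnd ℂ) (g 2 2) * g 0 2 = 0 := by
    have h := congrFun (congrFun hG 2) 2
    simp [Matrix.mul_apply, Fin.sum_univ_three, Matrix.conjTranspose_apply, Jmat,
      Matrix.vecHead, Matrix.vecTail] at h
    linear_combination h
  simp only [map_add, _root_.map_mul]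
  linear_combination ((starRingEnd ℂ) t1 * t1) * e00 + ((starRingEnd ℂ) t1 * t2) * e01 + ((starRingEnd ℂ) t1 * 1) * e02 + ((starRingEnd ℂ) t2 * t1) * e10 + ((starRingEnd ℂ) t2 * t2) * e11 + ((starRingEnd ℂ) t2 * 1) * e12 + (1 * t1) * e20 + (1 * t2) * e21 + (1 * 1) * e22

lemma act_mem {g : Matrix (Fin 3) (Fin 3) ℂ} (hg : g ∈ SU21) {τ : ℂ × ℂ}
    (hτ : τ ∈ UpperH) : act g τ ∈ UpperH := by
  have hj : jcocycle g τ ≠ 0 := jcocycle_ne hg hτ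
  have C := form_inv hg τ.1 τ.2
  rw [show g 2 0*τ.1+g 2 1*τ.2+g 2 2 = jcocycle g τ from rfl] at C
  set j := jcocycle g τ with hjdef
  set w0 := g 0 0*τ.1+g 0 1*τ.2+g 0 2 with hw0
  set w1 := g 1 0*τ.1+g 1 1*τ.2+g 1 2 with hw1
  have h2 : (Complex.normSq j : ℂ) * ((w0/j) + (starRingEnd ℂ) (w0/j)
      + (starRingEnd ℂ) (w1/j) * (w1/j))
      = (starRingEnd ℂ) τ.1 + τ.1 + (starRingEnd ℂ) τ.2 * τ.2 := by
    have hj' : (starRingEnd ℂ) j ≠ 0 := by simpa using hj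
    rw [← C, ← Complex.mul_conj]
    simp only [map_div₀]
    field_simp
    ring
  have h3 := congrArg Complex.re h2
  simp only [Complex.add_re, Complex.conj_re, Complex.mul_re, Complex.ofReal_re,
    Complex.ofReal_im, Complex.conj_im, Complex.mul_im] at h3
  have hnj : 0 < Complex.normSq j := Complex.normSq_pos.2 hj
  have hgoal : 2 * ((w0/j).re) + Complex.normSq (w1/j) < 0 := by
    have hns1 : Complex.normSq (w1/j) = (w1/j).re^2 + (w1/j).im^2 := Complex.normSq_apply _ ▸ by ring
    have hτ' : 2 * τ.1.re + Complex.normSq τ.2 < 0 := hτ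
    have hns2 : Complex.normSq τ.2 = τ.2.re^2 + τ.2.im^2 := Complex.normSq_apply _ ▸ by ring
    nlinarith [h3, hnj]
  exact hgoal

lemma SU21_mul {g h : Matrix (Fin 3) (Fin 3) ℂ} (hg : g ∈ SU21) (hh : h ∈ SU21) :
    g * h ∈ SU21 := by
  obtain ⟨hd1, hG1⟩ := hg
  obtain ⟨hd2, hG2⟩ := hh
  refine ⟨by rw [Matrix.det_mul, hd1, hd2, one_mul], ?_⟩
  rw [Matrix.conjTranspose_mul]
  calc hᴴ * gᴴ * Jmat * (g * h) = hᴴ * (gᴴ * Jmat * g) * h := by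
        simp only [Matrix.mul_assoc]
    _ = Jmat := by rw [hG1, hG2]

lemma jmul {g h : Matrix (Fin 3) (Fin 3) ℂ} {τ : ℂ × ℂ} (hj : jcocycle h τ ≠ 0) :
    jcocycle (g * h) τ = jcocycle g (act h τ) * jcocycle h τ := by
  unfold jcocycle act jcocycle at *
  simp only [Matrix.mul_apply, Fin.sum_univ_three]
  field_simp
  ring

lemma div_X_ne {g : Matrix (Fin 3) (Fin 3) ℂ} (hg : g ∈ SU21) {τ : ℂ × ℂ}
    (hτ : τ ∈ UpperH) : jcocycle g τ / Xfun g ≠ 0 := by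
  intro h
  have := re_div_pos hg hτ
  rw [h] at this; simp at this

lemma exp_jtilde {g : Matrix (Fin 3) (Fin 3) ℂ} (hg : g ∈ SU21) {τ : ℂ × ℂ}
    (hτ : τ ∈ UpperH) : Complex.exp (jtilde g τ) = jcocycle g τ := by
  unfold jtilde
  rw [Complex.exp_add, Complex.exp_log (div_X_ne hg hτ), Complex.exp_log (Xfun_ne hg),
    div_mul_cancel₀ _ (Xfun_ne hg)]

lemma τ0_mem : τ0 ∈ UpperH := by
  simp [τ0, UpperH]

lemma jco_one (τ : ℂ × ℂ) : jcocycle 1 τ = 1 := by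
  simp [jcocycle, Matrix.one_apply]

lemma Xfun_one : Xfun 1 = 1 := by
  simp [Xfun, Matrix.one_apply]

lemma jtilde_one (τ : ℂ × ℂ) : jtilde 1 τ = 0 := by
  simp [jtilde, jco_one, Xfun_one]

lemma act_one (τ : ℂ × ℂ) : act 1 τ = τ := by
  simp [act, jco_one, Matrix.one_apply]

lemma sigmaZ_one_right (g : Matrix (Fin 3) (Fin 3) ℂ) : sigmaZ g 1 = 0 := by
  have : sigmaC g 1 = 0 := by
    unfold sigmaC
    rw [mul_one, act_one, jtilde_one]
    simp
  simp [sigmaZ, this]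

lemma D_int {g h : Matrix (Fin 3) (Fin 3) ℂ} (hg : g ∈ SU21) (hh : h ∈ SU21)
    {τ : ℂ × ℂ} (hτ : τ ∈ UpperH) :
    ∃ n : ℤ, jtilde (g * h) τ - jtilde g (act h τ) - jtilde h τ
      = n * (2 * Real.pi * Complex.I) := by
  rw [← Complex.exp_eq_one_iff]
  rw [Complex.exp_sub, Complex.exp_sub, exp_jtilde (SU21_mul hg hh) hτ,
    exp_jtilde hg (act_mem hh hτ), exp_jtilde hh hτ,
    jmul (jcocycle_ne hh hτ)]
  field_simp [jcocycle_ne hg (act_mem hh hτ), jcocycle_ne hh hτ]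

lemma cont_jco (g : Matrix (Fin 3) (Fin 3) ℂ) : Continuous (jcocycle g) := by
  unfold jcocycle
  fun_prop

lemma cont_jtilde {g : Matrix (Fin 3) (Fin 3) ℂ} (hg : g ∈ SU21) :
    ContinuousOn (jtilde g) UpperH := by
  unfold jtilde
  refine ContinuousOn.add ?_ continuousOn_const
  intro τ hτ
  have h0 : ContinuousAt (fun σ : ℂ × ℂ => jcocycle g σ / Xfun g) τ :=
    ((cont_jco g).div_const (Xfun g)).continuousAt
  have h1 := ContinuousAt.comp (x := τ) (g := Complex.log)
    (continuousAt_clog (Or.inl (re_div_pos hg hτ))) h0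
  exact h1.continuousWithinAt

lemma cont_act {g : Matrix (Fin 3) (Fin 3) ℂ} (hg : g ∈ SU21) :
    ContinuousOn (act g) UpperH := by
  unfold act
  refine ContinuousOn.prodMk ?_ ?_ <;>
    exact ContinuousOn.div (by fun_prop) (cont_jco g).continuousOn
      (fun τ hτ => jcocycle_ne hg hτ)

lemma imval (z : ℂ) (n : ℤ) (hz : z = n * (2 * Real.pi * Complex.I)) :
    z.im / (2 * Real.pi) = n := by
  rw [hz]
  simp [Complex.mul_im]

lemma D_const {g h : Matrix (Fin 3) (Fin 3) ℂ} (hg : g ∈ SU21) (hh : h ∈ SU21)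
    {τ : ℂ × ℂ} (hτ : τ ∈ UpperH) :
    jtilde (g * h) τ - jtilde g (act h τ) - jtilde h τ
      = jtilde (g * h) τ0 - jtilde g (act h τ0) - jtilde h τ0 := by
  set F : (ℂ × ℂ) → ℂ := fun σ => jtilde (g * h) σ - jtilde g (act h σ) - jtilde h σ
    with hF
  have hFc : ContinuousOn F UpperH :=
    ((cont_jtilde (SU21_mul hg hh)).sub
      ((cont_jtilde hg).comp (cont_act hh) (fun σ hσ => act_mem hh hσ))).sub
      (cont_jtilde hh)
  set γ : ℝ → ℂ × ℂ := fun t =>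
    ((1 - (t:ℂ)) * τ0.1 + (t:ℂ) * τ.1, (1 - (t:ℂ)) * τ0.2 + (t:ℂ) * τ.2) with hγ
  have hγc : Continuous γ := by fun_prop
  have hγ0 : γ 0 = τ0 := by simp [hγ]
  have hγ1 : γ 1 = τ := by simp [hγ]
  have hγmem : ∀ t ∈ Set.Icc (0:ℝ) 1, γ t ∈ UpperH := by
    intro t ht
    have hτ' : 2 * τ.1.re + Complex.normSq τ.2 < 0 := hτ
    have hns : 0 ≤ Complex.normSq τ.2 := Complex.normSq_nonneg _
    show 2 * ((1 - (t:ℂ)) * τ0.1 + (t:ℂ) * τ.1).re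
      + Complex.normSq ((1 - (t:ℂ)) * τ0.2 + (t:ℂ) * τ.2) < 0
    have e1 : (1 - (t:ℂ)) * τ0.1 + (t:ℂ) * τ.1 = Complex.ofReal (t - 1) + (t:ℂ) * τ.1 := by
      rw [show τ0.1 = -1 from rfl]; push_cast; ring
    have e2 : (1 - (t:ℂ)) * τ0.2 + (t:ℂ) * τ.2 = (t:ℂ) * τ.2 := by
      rw [show τ0.2 = 0 from rfl]; ring
    rw [e1, e2]
    simp only [Complex.add_re, Complex.ofReal_re, Complex.mul_re, Complex.ofReal_im,
      Complex.normSq_mul, Complex.normSq_ofReal]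
    obtain ⟨ht0, ht1⟩ := ht
    rcases eq_or_lt_of_le ht1 with rfl | htlt
    · nlinarith
    · nlinarith [mul_nonneg ht0 (neg_nonneg.2 hτ'.le),
        mul_nonneg (mul_nonneg ht0 (sub_nonneg.2 ht1)) hns]
  have hint : ∀ t ∈ Set.Icc (0:ℝ) 1, ∃ n : ℤ, F (γ t) = n * (2 * Real.pi * Complex.I) :=
    fun t ht => D_int hg hh (hγmem t ht)
  set φ : ℝ → ℝ := fun t => (F (γ t)).im / (2 * Real.pi) with hφ
  have hφc : ContinuousOn φ (Set.Icc 0 1) :=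
    ((Complex.continuous_im.comp_continuousOn
      (hFc.comp hγc.continuousOn hγmem)).div_const _)
  have hφint : ∀ t ∈ Set.Icc (0:ℝ) 1, ∃ n : ℤ, φ t = n := by
    intro t ht
    obtain ⟨n, hn⟩ := hint t ht
    exact ⟨n, imval _ _ hn⟩
  obtain ⟨n0, h0⟩ := hint 0 (by norm_num)
  obtain ⟨n1, h1⟩ := hint 1 (by norm_num)
  have hφ0 : φ 0 = n0 := imval _ _ h0
  have hφ1 : φ 1 = n1 := imval _ _ h1
  have key : n0 = n1 := by
    by_contra hne
    have hIcc : Set.uIcc (0:ℝ) 1 = Set.Icc 0 1 := Set.uIcc_of_le zero_le_one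
    have hsub := intermediate_value_uIcc (f := φ) (a := 0) (b := 1) (by rw [hIcc]; exact hφc)
    set c : ℝ := ((min n0 n1 : ℤ) : ℝ) + 1/2 with hc
    have hcmem : c ∈ Set.uIcc (φ 0) (φ 1) := by
      rw [hφ0, hφ1, Set.mem_uIcc]
      rcases le_or_gt n0 n1 with hle | hlt
      · left
        rw [hc, min_eq_left hle]
        have h1 : ((n0:ℝ)) + 1 ≤ n1 := by exact_mod_cast (by omega : n0 + 1 ≤ n1)
        exact ⟨by linarith, by linarith⟩
      · right
        rw [hc, min_eq_right hlt.le]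
        have h1 : ((n1:ℝ)) + 1 ≤ n0 := by exact_mod_cast (by omega : n1 + 1 ≤ n0)
        exact ⟨by linarith, by linarith⟩
    obtain ⟨t, htmem, hφt⟩ := hsub hcmem
    rw [hIcc] at htmem
    obtain ⟨m, hm⟩ := hφint t htmem
    rw [hm] at hφt
    have : (2 * m : ℝ) = 2 * ((min n0 n1 : ℤ) : ℝ) + 1 := by rw [hc] at hφt; linarith
    have : (2 * m : ℤ) = 2 * min n0 n1 + 1 := by exact_mod_cast this
    omega
  have : F τ = F τ0 := by
    rw [← hγ1, ← hγ0, h1, h0, key]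
  exact this

lemma D_eq_sigma {g h : Matrix (Fin 3) (Fin 3) ℂ} (hg : g ∈ SU21) (hh : h ∈ SU21)
    {τ : ℂ × ℂ} (hτ : τ ∈ UpperH) :
    jtilde (g * h) τ - jtilde g (act h τ) - jtilde h τ
      = (sigmaZ g h : ℂ) * (2 * Real.pi * Complex.I) := by
  obtain ⟨n, hn⟩ := D_int hg hh τ0_mem
  have h2pi : (2 * (Real.pi:ℂ) * Complex.I) ≠ 0 := by
    simp [Real.pi_ne_zero, Complex.I_ne_zero]
  have hc : sigmaC g h = n := by
    unfold sigmaC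
    rw [hn, mul_div_cancel_right₀ _ h2pi]
  have hz : sigmaZ g h = n := by
    unfold sigmaZ
    rw [hc]
    simp
  rw [D_const hg hh hτ, hn, hz]

theorem character_gives_multiplier_system
    (Γ : Set (Matrix (Fin 3) (Fin 3) ℂ)) (hΓsub : Γ ⊆ SU21)
    (hΓone : (1 : Matrix (Fin 3) (Fin 3) ℂ) ∈ Γ)
    (hΓmul : ∀ g ∈ Γ, ∀ h ∈ Γ, g * h ∈ Γ)
    (w : ℚ) (a : ℤ) (b : ℕ) (hb : b ≠ 0) (hw : w = (a : ℚ) / (b : ℚ))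
    (Φ : Matrix (Fin 3) (Fin 3) ℂ → ℤ → ℂ)
    (hΦhom : ∀ g ∈ Γ, ∀ h ∈ Γ, ∀ n m : ℤ,
      Φ (g * h) (n + m + sigmaZ g h) = Φ g n * Φ h m)
    (hΦ1 : Φ 1 1 = Complex.exp (2 * Real.pi * Complex.I * (w : ℂ))) :
    let ℓ : Matrix (Fin 3) (Fin 3) ℂ → (ℂ × ℂ) → ℂ := fun g τ =>
      Φ g 0 * Complex.exp ((w : ℂ) * jtilde g τ)
    (∀ g ∈ Γ, ∀ h ∈ Γ, ∀ τ ∈ UpperH,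
      ℓ (g * h) τ = ℓ g (act h τ) * ℓ h τ) ∧
    (∀ g ∈ Γ, ∀ τ ∈ UpperH, ℓ g τ ^ b = Φ g 0 ^ b * jcocycle g τ ^ a) := by
  intro ℓ
  have hE : Complex.exp (2 * Real.pi * Complex.I * (w:ℂ)) ≠ 0 := Complex.exp_ne_zero _
  have hstep : ∀ g ∈ Γ, ∀ n : ℤ,
      Φ g (n + 1) = Φ g n * Complex.exp (2 * Real.pi * Complex.I * (w:ℂ)) := by
    intro g hg n
    have h := hΦhom g hg 1 hΓone n 1
    rw [sigmaZ_one_right, add_zero, mul_one, hΦ1] at h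
    exact h
  have hshift : ∀ g ∈ Γ, ∀ n : ℤ,
      Φ g n = Φ g 0 * Complex.exp (2 * Real.pi * Complex.I * (w:ℂ) * (n:ℂ)) := by
    intro g hg n
    induction n using Int.induction_on with
    | zero => simp
    | succ k ih =>
        rw [hstep g hg k, ih, mul_assoc, ← Complex.exp_add]
        congr 2
        push_cast
        ring
    | pred k ih =>
        have h1 := hstep g hg (-(k:ℤ) - 1)
        have e : (-(k:ℤ) - 1) + 1 = -(k:ℤ) := by ring
        rw [e] at h1
        apply mul_right_cancel₀ hE
        rw [← h1, ih]
        have hx : ((-(k:ℤ) : ℤ) : ℂ) = ((-(k:ℤ) - 1 : ℤ) : ℂ) + 1 := by push_cast; ring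
        rw [hx, mul_add, Complex.exp_add, mul_one]
        ring
  constructor
  · intro g hg h hh τ hτ
    have hgS := hΓsub hg
    have hhS := hΓsub hh
    have hσ := D_eq_sigma hgS hhS hτ
    have hmem := hΓmul g hg h hh
    have hkey : Φ g 0 * Φ h 0
        = Φ (g * h) 0 * Complex.exp (2 * Real.pi * Complex.I * (w:ℂ) * ((sigmaZ g h : ℤ):ℂ)) := by
      rw [← hΦhom g hg h hh 0 0]
      have h2 := hshift (g * h) hmem (0 + 0 + sigmaZ g h)
      rw [h2]
      norm_num
    show Φ (g * h) 0 * Complex.exp ((w:ℂ) * jtilde (g * h) τ)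
      = (Φ g 0 * Complex.exp ((w:ℂ) * jtilde g (act h τ)))
        * (Φ h 0 * Complex.exp ((w:ℂ) * jtilde h τ))
    have hre : (Φ g 0 * Complex.exp ((w:ℂ) * jtilde g (act h τ)))
        * (Φ h 0 * Complex.exp ((w:ℂ) * jtilde h τ))
        = (Φ g 0 * Φ h 0) * Complex.exp ((w:ℂ) * jtilde g (act h τ) + (w:ℂ) * jtilde h τ) := by
      rw [Complex.exp_add]; ring
    have hexp : (w:ℂ) * jtilde (g * h) τ
        = 2 * Real.pi * Complex.I * (w:ℂ) * ((sigmaZ g h : ℤ):ℂ)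
          + ((w:ℂ) * jtilde g (act h τ) + (w:ℂ) * jtilde h τ) := by
      linear_combination (w:ℂ) * hσ
    rw [hre, hkey, mul_assoc, ← Complex.exp_add, ← hexp]
  · intro g hg τ hτ
    have hgS := hΓsub hg
    show (Φ g 0 * Complex.exp ((w:ℂ) * jtilde g τ)) ^ b = Φ g 0 ^ b * jcocycle g τ ^ a
    rw [mul_pow]
    congr 1
    rw [← Complex.exp_nat_mul]
    have hb' : ((b:ℕ):ℂ) ≠ 0 := Nat.cast_ne_zero.2 hb
    have hwc : ((w:ℂ)) * (b:ℂ) = (a:ℂ) := by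
      rw [hw]; push_cast; field_simp
    have harg : (b:ℂ) * ((w:ℂ) * jtilde g τ) = ((a:ℤ):ℂ) * jtilde g τ := by
      rw [← hwc]; ring
    rw [harg, Complex.exp_int_mul, exp_jtilde hgS hτ]
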